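/- Lower bound on the non-excess probability (Lemma 4.8, counting form): let n = m·α with m, α ≥ 1 naturals, and let d be a natural number with α ≤ d ≤ n and d dividing n (so n/d ≤ m). Then |{f : Fin n → Fin m ; ∀ k ∈ Fin m, |f⁻¹(k)| ≤ d}| ≥ m^n · √(2πn) · (2πd)^{−n/(2d)} · (α/d)^n · e^{−n/(12d²)} · (α+1)^{m − n/d}; in the paper's notation with c = d/α this reads P(T_max ≤ d) ≥ (√(2πn)/(2πd)^{m/(2c)}) · c^{−n} · e^{−m/(12cd)} · (α+1)^{m(1−1/c)}, where T_max is the maximum fiber size of a uniformly random function from Fin n to Fin m. -/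

import Mathlib

open Finset Real Filter Stirling Topology


lemma sqrtpi_le_stirlingSeq (n : ℕ) : Real.sqrt π ≤ stirlingSeq (n + 1) :=
  stirlingSeq'_antitone.le_of_tendsto
    (tendsto_stirlingSeq_sqrt_pi.comp (tendsto_add_atTop_nat 1)) n

lemma stirling_lower (n : ℕ) (hn : 1 ≤ n) :
    Real.sqrt (2 * π * n) * ((n : ℝ) / Real.exp 1) ^ n ≤ Nat.factorial n := by
  obtain ⟨p, rfl⟩ := Nat.exists_eq_add_of_le' hn
  have h1 := sqrtpi_le_stirlingSeq p
  have hc : (0:ℝ) < ((p+1 : ℕ):ℝ) := by positivity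
  have hpos : 0 < Real.sqrt (2 * (p + 1 : ℕ) : ℝ) * (((p + 1 : ℕ) : ℝ) / Real.exp 1) ^ (p + 1) := by
    positivity
  rw [stirlingSeq, le_div_iff₀ hpos] at h1
  calc Real.sqrt (2 * π * (p+1 : ℕ)) * (((p+1:ℕ) : ℝ) / Real.exp 1) ^ (p+1)
      = Real.sqrt π * (Real.sqrt (2 * (p+1 : ℕ)) * (((p+1:ℕ):ℝ) / Real.exp 1) ^ (p+1)) := by
        rw [show (2 * π * ((p+1:ℕ):ℝ)) = π * (2 * ((p+1:ℕ):ℝ)) by ring,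
          Real.sqrt_mul pi_pos.le]
        ring
    _ ≤ Nat.factorial (p+1) := h1

lemma log_diff_le (k : ℕ) :
    Real.log (stirlingSeq (k + 1)) - Real.log (stirlingSeq (k + 2)) ≤
      1 / (12 * ((k:ℝ) + 1) * ((k:ℝ) + 2)) := by
  have hs := Stirling.log_stirlingSeq_diff_hasSum k
  push_cast at hs
  set x : ℝ := (1 / (2 * ((k:ℝ) + 1) + 1)) ^ 2 with hx
  have hk0 : (0:ℝ) ≤ (k:ℝ) := Nat.cast_nonneg k
  have ha1 : (1 : ℝ) / (2 * ((k:ℝ) + 1) + 1) < 1 := by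
    rw [div_lt_one (by positivity)]; linarith
  have hx0 : 0 ≤ x := by positivity
  have hx1 : x < 1 := pow_lt_one₀ (by positivity) ha1 two_ne_zero
  have hg : HasSum (fun j : ℕ => (1/3 : ℝ) * x ^ (j+1)) (x / 3 * (1 - x)⁻¹) := by
    have h := (hasSum_geometric_of_lt_one hx0 hx1).mul_left (x/3)
    convert h using 2 with j
    · rfl
    ring
  have hle : Real.log (stirlingSeq (k + 1)) - Real.log (stirlingSeq (k + 2)) ≤
      x / 3 * (1 - x)⁻¹ := by
    refine hasSum_le (fun j => ?_) hs hg
    have h1 : (1:ℝ) / (2 * ((j:ℝ)+1) + 1) ≤ 1/3 := by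
      rw [div_le_div_iff₀ (by positivity) (by norm_num)]
      have : (0:ℝ) ≤ (j:ℝ) := Nat.cast_nonneg j
      linarith
    have h2 : (0:ℝ) ≤ x ^ (j+1) := by positivity
    exact mul_le_mul_of_nonneg_right h1 h2
  refine hle.trans (le_of_eq ?_)
  have h1x : (0:ℝ) < 1 - x := by linarith
  have hD : (0:ℝ) < 12*((k:ℝ)+1)*((k:ℝ)+2) := by positivity
  have key : x * (12*((k:ℝ)+1)*((k:ℝ)+2)) = 3*(1-x) := by
    rw [hx]
    have hne : (2 * ((k:ℝ) + 1) + 1) ≠ 0 := by positivity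
    field_simp
    ring
  rw [eq_div_iff hD.ne']
  calc x/3*(1-x)⁻¹*(12*((k:ℝ)+1)*((k:ℝ)+2)) = (x*(12*((k:ℝ)+1)*((k:ℝ)+2)))/3 * (1-x)⁻¹ := by ring
    _ = (3*(1-x))/3*(1-x)⁻¹ := by rw [key]
    _ = (1-x)*(1-x)⁻¹ := by ring
    _ = 1 := mul_inv_cancel₀ h1x.ne'

lemma log_telescope (p : ℕ) : ∀ j : ℕ,
    Real.log (stirlingSeq (p + 1)) - Real.log (stirlingSeq (p + 1 + j)) ≤
      1 / (12 * ((p:ℝ) + 1)) - 1 / (12 * ((p:ℝ) + 1 + j)) := by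
  intro j
  induction j with
  | zero => simp
  | succ j ih =>
    have hstep := log_diff_le (p + j)
    have hcast : ((p + j : ℕ) : ℝ) = (p:ℝ) + j := by push_cast; ring
    rw [hcast] at hstep
    have heq : (1:ℝ) / (12 * ((p:ℝ) + 1 + j)) - 1 / (12 * ((p:ℝ) + 1 + (j+1))) =
        1 / (12 * ((p:ℝ) + j + 1) * ((p:ℝ) + j + 2)) := by
      have h1 : (12 * ((p:ℝ) + 1 + j)) ≠ 0 := by positivity
      have h2 : (12 * ((p:ℝ) + 1 + (j+1))) ≠ 0 := by positivity
      field_simp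
      ring
    have hidx1 : p + 1 + j + 1 = p + 1 + (j + 1) := by ring
    have hidx2 : p + j + 1 = p + 1 + j := by ring
    have hidx3 : p + j + 2 = p + 1 + j + 1 := by ring
    rw [hidx2, hidx3, hidx1] at hstep
    push_cast
    push_cast at ih hstep heq
    linarith

lemma stirlingSeq_le (p : ℕ) :
    stirlingSeq (p + 1) ≤ Real.sqrt π * Real.exp (1 / (12 * ((p:ℝ) + 1))) := by
  have hpos : 0 < stirlingSeq (p + 1) := stirlingSeq'_pos p
  have hlim : Tendsto (fun j : ℕ => Real.log (stirlingSeq (p + 1 + j)) + 1 / (12 * ((p:ℝ) + 1)))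
      atTop (𝓝 (Real.log (Real.sqrt π) + 1 / (12 * ((p:ℝ) + 1)))) := by
    apply Tendsto.add_const
    have h1 : Tendsto (fun j : ℕ => stirlingSeq (p + 1 + j)) atTop (𝓝 (Real.sqrt π)) := by
      have := tendsto_stirlingSeq_sqrt_pi.comp (tendsto_add_atTop_nat (p + 1))
      convert this using 2 with j
      simp [Function.comp, Nat.add_comm]
    exact (Real.continuousAt_log (by positivity)).tendsto.comp h1
  have hb : ∀ j : ℕ, Real.log (stirlingSeq (p + 1)) ≤
      Real.log (stirlingSeq (p + 1 + j)) + 1 / (12 * ((p:ℝ) + 1)) := by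
    intro j
    have h := log_telescope p j
    have h2 : (0:ℝ) ≤ 1 / (12 * ((p:ℝ) + 1 + j)) := by positivity
    linarith
  have hfin := ge_of_tendsto' hlim hb
  have := Real.exp_le_exp.mpr hfin
  rw [Real.exp_log hpos, Real.exp_add, Real.exp_log (by positivity : (0:ℝ) < Real.sqrt π)] at this
  exact this

lemma stirling_upper (d : ℕ) (hd : 1 ≤ d) :
    (Nat.factorial d : ℝ) ≤
      Real.sqrt (2 * π * d) * ((d : ℝ) / Real.exp 1) ^ d * Real.exp (1 / (12 * (d:ℝ))) := by
  obtain ⟨p, rfl⟩ := Nat.exists_eq_add_of_le' hd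
  have h1 := stirlingSeq_le p
  have hc : (0:ℝ) < ((p+1 : ℕ):ℝ) := by positivity
  have hpos : 0 < Real.sqrt (2 * (p + 1 : ℕ) : ℝ) * (((p + 1 : ℕ) : ℝ) / Real.exp 1) ^ (p + 1) := by
    positivity
  rw [stirlingSeq, div_le_iff₀ hpos] at h1
  have hcast : ((p + 1 : ℕ) : ℝ) = (p:ℝ) + 1 := by push_cast; ring
  calc (Nat.factorial (p+1) : ℝ)
      ≤ Real.sqrt π * Real.exp (1 / (12 * ((p:ℝ) + 1))) *
          (Real.sqrt (2 * (p+1 : ℕ)) * (((p+1:ℕ):ℝ) / Real.exp 1) ^ (p+1)) := h1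
    _ = Real.sqrt (2 * π * (p+1:ℕ)) * (((p+1:ℕ):ℝ) / Real.exp 1) ^ (p+1) *
          Real.exp (1 / (12 * ((p+1:ℕ):ℝ))) := by
        rw [show (2 * π * ((p+1:ℕ):ℝ)) = π * (2 * ((p+1:ℕ):ℝ)) by ring,
          Real.sqrt_mul pi_pos.le, hcast]
        ring


-- sum of clamped remainders
lemma sum_min_full (d R : ℕ) : ∀ r : ℕ, d * r ≤ R →
    ∑ j ∈ Finset.range r, min d (R - d * j) = d * r := by
  intro r
  induction r with
  | zero => simp
  | succ r ih =>
    intro h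
    rw [Nat.mul_succ] at h ⊢
    rw [Finset.sum_range_succ, ih (by omega)]
    have : min d (R - d * r) = d := by omega
    omega

lemma sum_min_eq (d R : ℕ) : ∀ r : ℕ, R ≤ d * r →
    ∑ j ∈ Finset.range r, min d (R - d * j) = R := by
  intro r
  induction r with
  | zero => intro h; simp at *; omega
  | succ r ih =>
    intro h
    rw [Nat.mul_succ] at h
    rw [Finset.sum_range_succ]
    rcases le_or_gt R (d * r) with hle | hlt
    · rw [ih hle]
      have : R - d * r = 0 := by omega
      simp [this]
    · rw [sum_min_full d R r (by omega)]
      omega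

-- (a!)^b ≤ (b!)^a for a ≤ b
lemma fact_pow_le {a b : ℕ} (h : a ≤ b) :
    (Nat.factorial a) ^ b ≤ (Nat.factorial b) ^ a := by
  induction b, h using Nat.le_induction with
  | base => exact le_rfl
  | succ b hab ih =>
    rw [pow_succ, Nat.factorial_succ, mul_pow]
    have h1 : Nat.factorial a ≤ (b + 1) ^ a :=
      (Nat.factorial_le_pow a).trans (Nat.pow_le_pow_left (by omega) a)
    calc Nat.factorial a ^ b * Nat.factorial a
        ≤ Nat.factorial b ^ a * (b + 1) ^ a := Nat.mul_le_mul ih h1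
      _ = (b + 1) ^ a * Nat.factorial b ^ a := by ring

lemma prod_fact_le {m d r : ℕ} (hd : 1 ≤ d) (t : Fin m → ℕ) (ht : ∀ k, t k ≤ d)
    (hsum : ∑ k, t k = d * r) :
    ∏ k, Nat.factorial (t k) ≤ (Nat.factorial d) ^ r := by
  rw [← Nat.pow_le_pow_iff_left (n := d) (by omega)]
  calc (∏ k, Nat.factorial (t k)) ^ d
      = ∏ k, (Nat.factorial (t k)) ^ d := by rw [Finset.prod_pow]
    _ ≤ ∏ k, (Nat.factorial d) ^ (t k) := Finset.prod_le_prod' fun k _ => fact_pow_le (ht k)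
    _ = (Nat.factorial d) ^ (∑ k, t k) := by rw [Finset.prod_pow_eq_pow_sum]
    _ = ((Nat.factorial d) ^ r) ^ d := by rw [hsum, ← pow_mul, Nat.mul_comm d r, pow_mul]

-- equiv between fiber of Sigma.fst and the component
def sigmaFstFiber {m : ℕ} (t : Fin m → ℕ) (k : Fin m) :
    {p : Σ i : Fin m, Fin (t i) // p.1 = k} ≃ Fin (t k) where
  toFun p := Fin.cast (congrArg t p.2) p.1.2
  invFun y := ⟨⟨k, y⟩, rfl⟩
  left_inv := by rintro ⟨⟨i, y⟩, rfl⟩; rfl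
  right_inv y := rfl

noncomputable def gfun {m nn : ℕ} (t : Fin m → ℕ) (h : ∑ k, t k = nn) : Fin nn → Fin m :=
  fun x => (Fintype.equivOfCardEq (by simp [Fintype.card_sigma, h] :
    Fintype.card (Fin nn) = Fintype.card (Σ k : Fin m, Fin (t k))) x).1

lemma card_fiber_gfun {m nn : ℕ} (t : Fin m → ℕ) (h : ∑ k, t k = nn) (k : Fin m) :
    (Finset.univ.filter fun x => gfun t h x = k).card = t k := by
  calc (Finset.univ.filter fun x => gfun t h x = k).card
      = Fintype.card {x // gfun t h x = k} := (Fintype.card_subtype _).symm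
    _ = Fintype.card (Fin (t k)) := Fintype.card_congr
        (((Fintype.equivOfCardEq (by simp [Fintype.card_sigma, h] :
          Fintype.card (Fin nn) = Fintype.card (Σ k : Fin m, Fin (t k)))).subtypeEquiv
            (fun x => Iff.rfl)).trans (sigmaFstFiber t k))
    _ = t k := Fintype.card_fin _

lemma card_fiber_comp {m nn : ℕ} (g : Fin nn → Fin m) (σ : Equiv.Perm (Fin nn)) (k : Fin m) :
    (Finset.univ.filter fun x => g (σ x) = k).card =
      (Finset.univ.filter fun x => g x = k).card := by
  rw [← Fintype.card_subtype, ← Fintype.card_subtype]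
  exact Fintype.card_congr (σ.subtypeEquiv fun x => Iff.rfl)

lemma card_perm_le {nn m : ℕ} (g f : Fin nn → Fin m)
    (hc : ∀ k, Fintype.card {x // f x = k} = Fintype.card {x // g x = k}) :
    Fintype.card {σ : Equiv.Perm (Fin nn) // ∀ x, g (σ x) = f x} ≤
      ∏ k : Fin m, Nat.factorial (Fintype.card {x // f x = k}) := by
  classical
  have hinj : Function.Injective
      (fun (σ : {σ : Equiv.Perm (Fin nn) // ∀ x, g (σ x) = f x}) =>
        (fun k : Fin m =>
          (⟨fun x : {x // f x = k} => (⟨σ.1 x.1, by rw [σ.2 x.1, x.2]⟩ : {x // g x = k}),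
            fun a b hab => Subtype.ext (σ.1.injective (congrArg Subtype.val hab))⟩ :
            {x // f x = k} ↪ {x // g x = k}))) := by
    intro σ τ hst
    refine Subtype.ext (Equiv.ext fun x => ?_)
    have h1 := congrFun hst (f x)
    have h2 := DFunLike.congr_fun h1 (⟨x, rfl⟩ : {y // f y = f x})
    exact congrArg Subtype.val h2
  calc Fintype.card {σ : Equiv.Perm (Fin nn) // ∀ x, g (σ x) = f x}
      ≤ Fintype.card (∀ k : Fin m, ({x // f x = k} ↪ {x // g x = k})) :=
        Fintype.card_le_of_injective _ hinj
    _ = ∏ k : Fin m, Fintype.card ({x // f x = k} ↪ {x // g x = k}) := Fintype.card_pi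
    _ = ∏ k : Fin m, (Fintype.card {x // g x = k}).descFactorial (Fintype.card {x // f x = k}) :=
        Finset.prod_congr rfl fun k _ => Fintype.card_embedding_eq
    _ = ∏ k : Fin m, Nat.factorial (Fintype.card {x // f x = k}) := by
        refine Finset.prod_congr rfl fun k _ => ?_
        rw [← hc k, Nat.descFactorial_self]

def tv {q r α : ℕ} (d nn : ℕ) (v : Fin q → Fin (α+1)) : Fin (q + r) → ℕ :=
  fun k => if h : (k : ℕ) < q then (v ⟨k, h⟩ : ℕ)
    else min d ((nn - ∑ i : Fin q, (v i : ℕ)) - d * ((k : ℕ) - q))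

lemma tv_le {q r α : ℕ} (d nn : ℕ) (hαd : α ≤ d) (v : Fin q → Fin (α+1)) (k : Fin (q + r)) :
    tv d nn v k ≤ d := by
  unfold tv
  split
  · exact le_trans (Nat.lt_succ_iff.mp (v _).isLt) hαd
  · exact min_le_left _ _

lemma tv_castAdd {q r α : ℕ} (d nn : ℕ) (v : Fin q → Fin (α+1)) (i : Fin q) :
    tv (r := r) d nn v (Fin.castAdd r i) = (v i : ℕ) := by
  unfold tv
  rw [dif_pos (by simpa using i.isLt)]
  congr 1

lemma tv_natAdd {q r α : ℕ} (d nn : ℕ) (v : Fin q → Fin (α+1)) (j : Fin r) :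
    tv d nn v (Fin.natAdd q j) = min d ((nn - ∑ i : Fin q, (v i : ℕ)) - d * (j : ℕ)) := by
  unfold tv
  rw [dif_neg (by simp)]
  congr 2
  simp

lemma sum_tv {q r α : ℕ} (d nn : ℕ) (v : Fin q → Fin (α+1))
    (h1 : ∑ i : Fin q, (v i : ℕ) ≤ nn) (h2 : nn ≤ ∑ i : Fin q, (v i : ℕ) + d * r) :
    ∑ k, tv (r := r) d nn v k = nn := by
  rw [Fin.sum_univ_add]
  have e1 : ∀ i : Fin q, tv (r := r) d nn v (Fin.castAdd r i) = (v i : ℕ) := tv_castAdd d nn v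
  have e2 : ∀ j : Fin r, tv d nn v (Fin.natAdd q j) =
      min d ((nn - ∑ i : Fin q, (v i : ℕ)) - d * (j : ℕ)) := tv_natAdd d nn v
  rw [Finset.sum_congr rfl fun i _ => e1 i, Finset.sum_congr rfl fun j _ => e2 j]
  rw [Fin.sum_univ_eq_sum_range (fun j => min d ((nn - ∑ i : Fin q, (v i : ℕ)) - d * j)) r]
  rw [sum_min_eq d _ r (by omega)]
  omega

lemma count_lower (α d q r : ℕ) (hd : 1 ≤ d) (hαd : α ≤ d) (hq : α * q ≤ d * r)
    (nn m : ℕ) (hnn : nn = d * r) (hm : m = q + r) :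
    Nat.factorial nn * (α+1)^q ≤ (Nat.factorial d)^r *
      (Finset.univ.filter fun f : Fin nn → Fin m => ∀ k : Fin m,
        (Finset.univ.filter fun x => f x = k).card ≤ d).card := by
  subst hnn hm
  classical
  have hSle : ∀ v : Fin q → Fin (α+1), ∑ i : Fin q, (v i : ℕ) ≤ d * r := by
    intro v
    calc ∑ i : Fin q, (v i : ℕ) ≤ ∑ _i : Fin q, α :=
          Finset.sum_le_sum fun i _ => Nat.lt_succ_iff.mp (v i).isLt
      _ = α * q := by simp [Finset.sum_const, Nat.mul_comm]
      _ ≤ d * r := hq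
  have hsum : ∀ v : Fin q → Fin (α+1), ∑ k, tv (r := r) d (d*r) v k = d * r := fun v =>
    sum_tv d (d*r) v (hSle v) (Nat.le_add_left _ _)
  set G : (Fin q → Fin (α+1)) → Fin (d*r) → Fin (q+r) :=
    fun v => gfun (tv d (d*r) v) (hsum v) with hG
  set Ψ : Equiv.Perm (Fin (d*r)) × (Fin q → Fin (α+1)) → (Fin (d*r) → Fin (q+r)) :=
    fun p => fun x => G p.2 (p.1 x) with hΨ
  have hfib : ∀ p k, (Finset.univ.filter fun x => Ψ p x = k).card = tv d (d*r) p.2 k := by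
    intro p k
    rw [hΨ, hG]
    rw [card_fiber_comp (gfun (tv d (d*r) p.2) (hsum p.2)) p.1 k, card_fiber_gfun]
  have hrec : ∀ p p', Ψ p = Ψ p' → p.2 = p'.2 := by
    intro p p' h
    funext i
    have h1 := hfib p (Fin.castAdd r i)
    have h2 := hfib p' (Fin.castAdd r i)
    rw [h] at h1
    rw [h1] at h2
    rw [tv_castAdd, tv_castAdd] at h2
    exact Fin.val_injective h2
  have hbound : ∀ b ∈ Finset.univ.image Ψ,
      (Finset.univ.filter fun p => Ψ p = b).card ≤ (Nat.factorial d)^r := by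
    intro b hb
    obtain ⟨p₀, -, rfl⟩ := Finset.mem_image.mp hb
    have step1 : (Finset.univ.filter fun p => Ψ p = Ψ p₀).card ≤
        Fintype.card {σ : Equiv.Perm (Fin (d*r)) // ∀ x, G p₀.2 (σ x) = Ψ p₀ x} := by
      rw [Fintype.card_subtype]
      apply Finset.card_le_card_of_injOn (fun p => p.1)
      · intro p hp
        simp only [Finset.coe_filter, Finset.mem_filter, Finset.mem_univ, true_and, Set.mem_setOf_eq] at hp ⊢
        intro x
        have hv := hrec p p₀ hp
        rw [← hv, ← hp]
      · intro p hp p' hp' hpp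
        simp only [Finset.coe_filter, Set.mem_setOf_eq] at hp hp'
        exact Prod.ext hpp ((hrec p p₀ hp.2).trans (hrec p' p₀ hp'.2).symm)
    have step2 := card_perm_le (G p₀.2) (Ψ p₀) (fun k => by
      rw [Fintype.card_subtype, Fintype.card_subtype, hfib p₀ k, hG,
        card_fiber_gfun])
    have step3 : ∏ k : Fin (q+r), Nat.factorial (Fintype.card {x // Ψ p₀ x = k}) ≤
        (Nat.factorial d)^r := by
      have he : ∀ k, Fintype.card {x // Ψ p₀ x = k} = tv d (d*r) p₀.2 k := fun k => by
        rw [Fintype.card_subtype, hfib]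
      rw [Finset.prod_congr rfl fun k _ => congrArg Nat.factorial (he k)]
      exact prod_fact_le hd _ (tv_le d (d*r) hαd p₀.2) (hsum p₀.2)
    exact step1.trans (step2.trans step3)
  have hsub : (Finset.univ.image Ψ) ⊆ Finset.univ.filter
      (fun f : Fin (d*r) → Fin (q+r) =>
        ∀ k, (Finset.univ.filter fun x => f x = k).card ≤ d) := by
    intro b hb
    obtain ⟨p, -, rfl⟩ := Finset.mem_image.mp hb
    simp only [Finset.mem_filter, Finset.mem_univ, true_and]
    intro k
    rw [hfib p k]
    exact tv_le d (d*r) hαd p.2 k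
  have hcard : (Finset.univ : Finset (Equiv.Perm (Fin (d*r)) × (Fin q → Fin (α+1)))).card =
      Nat.factorial (d*r) * (α+1)^q := by
    rw [Finset.card_univ, Fintype.card_prod, Fintype.card_perm, Fintype.card_fun]
    simp
  calc Nat.factorial (d*r) * (α+1)^q
      = (Finset.univ : Finset (Equiv.Perm (Fin (d*r)) × (Fin q → Fin (α+1)))).card := hcard.symm
    _ ≤ (Nat.factorial d)^r * (Finset.univ.image Ψ).card :=
        Finset.card_le_mul_card_image Finset.univ _ hbound
    _ ≤ _ := Nat.mul_le_mul_left _ (Finset.card_le_card hsub)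


/-- **Lower bound on the non-excess probability** (Lemma 4.8, counting form): for
`n = m·α` with `α ≤ d ≤ n` and `d ∣ n`, the number of functions `Fin n → Fin m` whose
fibers all have size at most `d` is at least
`m^n · √(2πn) · (2πd)^(−n/(2d)) · (α/d)^n · e^(−n/(12d²)) · (α+1)^(m − n/d)`. -/
theorem non_excess_probability_lower_bound (m α d : ℕ) (hm : 1 ≤ m) (hα : 1 ≤ α)
    (hαd : α ≤ d) (hdn : d ≤ m * α) (hdvd : d ∣ m * α) :
    (m : ℝ) ^ (m * α) * Real.sqrt (2 * π * (m * α : ℕ)) *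
        (2 * π * (d : ℝ)) ^ (-((m * α : ℕ) : ℝ) / (2 * (d : ℝ))) *
        ((α : ℝ) / d) ^ (m * α) * Real.exp (-((m * α : ℕ) : ℝ) / (12 * (d : ℝ) ^ 2)) *
        ((α : ℝ) + 1) ^ (m - m * α / d)
      ≤ ((Finset.univ.filter fun f : Fin (m * α) → Fin m =>
          ∀ k : Fin m, (Finset.univ.filter fun x => f x = k).card ≤ d).card : ℝ) := by
  have hd1 : 1 ≤ d := hα.trans hαd
  set r := m * α / d with hrdef
  have hrd : d * r = m * α := Nat.mul_div_cancel' hdvd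
  have hN1 : 1 ≤ m * α := Nat.one_le_iff_ne_zero.mpr (by positivity)
  have hr1 : 1 ≤ r := Nat.div_pos hdn hd1
  have hrm : r ≤ m := by
    have h1 : m * α / d ≤ m * α / α := Nat.div_le_div_left hαd hα
    rwa [Nat.mul_div_cancel _ hα] at h1
  have hq : α * (m - r) ≤ d * r := by
    rw [hrd]
    calc α * (m - r) ≤ α * m := Nat.mul_le_mul_left α (Nat.sub_le m r)
      _ = m * α := Nat.mul_comm _ _
  have key := count_lower α d (m - r) r hd1 hαd hq (m * α) m hrd.symm
    (Nat.sub_add_cancel hrm).symm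
  set N := m * α with hN
  have keyR : (Nat.factorial N : ℝ) * ((α:ℝ)+1)^(m-r) ≤
      ((Nat.factorial d : ℝ))^r * ((Finset.univ.filter fun f : Fin N → Fin m =>
        ∀ k : Fin m, (Finset.univ.filter fun x => f x = k).card ≤ d).card : ℝ) := by
    exact_mod_cast key
  have hd0 : (0:ℝ) < d := by exact_mod_cast hd1
  have h2pd : (0:ℝ) < 2*π*(d:ℝ) := by positivity
  have hNr : ((N:ℕ):ℝ) = (d:ℝ) * (r:ℝ) := by rw [← hrd]; push_cast; ring
  have hNc : ((N:ℕ):ℝ) = (m:ℝ) * (α:ℝ) := by rw [hN]; push_cast; ring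
  have e1 : (2*π*(d:ℝ)) ^ (-((N:ℕ):ℝ)/(2*(d:ℝ))) = ((Real.sqrt (2*π*(d:ℝ)))^r)⁻¹ := by
    rw [hNr, show -((d:ℝ)*(r:ℝ))/(2*(d:ℝ)) = -(((1:ℝ)/2)*(r:ℝ)) by
      field_simp, Real.rpow_neg h2pd.le, Real.rpow_mul h2pd.le,
      Real.rpow_natCast, ← Real.sqrt_eq_rpow]
  have e2 : Real.exp (-((N:ℕ):ℝ)/(12*(d:ℝ)^2)) = ((Real.exp (1/(12*(d:ℝ))))^r)⁻¹ := by
    rw [hNr, show -((d:ℝ)*(r:ℝ))/(12*(d:ℝ)^2) = (r:ℕ)*(-(1/(12*(d:ℝ)))) by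
      field_simp, Real.exp_nat_mul, Real.exp_neg, inv_pow]
  have e3 : (((N:ℕ):ℝ)/Real.exp 1)^N =
      (m:ℝ)^N * ((α:ℝ)/(d:ℝ))^N * (((d:ℝ)/Real.exp 1)^d)^r := by
    have h4 : (((d:ℝ)/Real.exp 1)^d)^r = ((d:ℝ)/Real.exp 1)^N := by
      rw [← pow_mul, hrd]
    rw [h4, ← mul_pow, ← mul_pow]
    congr 1
    rw [hNc]
    field_simp
  have hfact : (0:ℝ) < ((Nat.factorial d : ℝ))^r := by positivity
  have hB : (Nat.factorial d : ℝ) ≤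
      Real.sqrt (2*π*(d:ℝ)) * ((d:ℝ)/Real.exp 1)^d * Real.exp (1/(12*(d:ℝ))) :=
    stirling_upper d hd1
  have hA : Real.sqrt (2*π*((N:ℕ):ℝ)) * (((N:ℕ):ℝ)/Real.exp 1)^N ≤ (Nat.factorial N : ℝ) :=
    stirling_lower N hN1
  set L : ℝ := (m : ℝ) ^ N * Real.sqrt (2 * π * (N:ℕ)) *
      (2 * π * (d : ℝ)) ^ (-((N : ℕ) : ℝ) / (2 * (d : ℝ))) *
      ((α : ℝ) / d) ^ N * Real.exp (-((N : ℕ) : ℝ) / (12 * (d : ℝ) ^ 2)) *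
      ((α : ℝ) + 1) ^ (m - r) with hL
  have hL0 : 0 ≤ L := by
    rw [hL]
    have : (0:ℝ) ≤ (2 * π * (d : ℝ)) ^ (-((N : ℕ) : ℝ) / (2 * (d : ℝ))) :=
      Real.rpow_nonneg h2pd.le _
    positivity
  have hBpow : ((Nat.factorial d : ℝ))^r ≤
      (Real.sqrt (2*π*(d:ℝ)) * ((d:ℝ)/Real.exp 1)^d * Real.exp (1/(12*(d:ℝ))))^r :=
    pow_le_pow_left₀ (by positivity) hB r
  have hE : L * (Real.sqrt (2*π*(d:ℝ)) * ((d:ℝ)/Real.exp 1)^d * Real.exp (1/(12*(d:ℝ))))^r =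
      Real.sqrt (2*π*((N:ℕ):ℝ)) * (((N:ℕ):ℝ)/Real.exp 1)^N * ((α:ℝ)+1)^(m-r) := by
    rw [hL, e1, e2, e3, mul_pow, mul_pow]
    have h5 : (Real.sqrt (2*π*(d:ℝ)))^r ≠ 0 := by positivity
    have h6 : (Real.exp (1/(12*(d:ℝ))))^r ≠ 0 := by positivity
    field_simp
  rw [← mul_le_mul_iff_left₀ hfact]
  calc L * ((Nat.factorial d : ℝ))^r
      ≤ L * (Real.sqrt (2*π*(d:ℝ)) * ((d:ℝ)/Real.exp 1)^d * Real.exp (1/(12*(d:ℝ))))^r :=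
        mul_le_mul_of_nonneg_left hBpow hL0
    _ = Real.sqrt (2*π*((N:ℕ):ℝ)) * (((N:ℕ):ℝ)/Real.exp 1)^N * ((α:ℝ)+1)^(m-r) := hE
    _ ≤ (Nat.factorial N : ℝ) * ((α:ℝ)+1)^(m-r) :=
        mul_le_mul_of_nonneg_right hA (by positivity)
    _ ≤ ((Nat.factorial d : ℝ))^r * ((Finset.univ.filter fun f : Fin N → Fin m =>
          ∀ k : Fin m, (Finset.univ.filter fun x => f x = k).card ≤ d).card : ℝ) := keyR
    _ = _ := mul_comm _ _
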